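/- The function l(s) = s²·e^{-s}/(1 - e^{-s})² is strictly decreasing on (0, ∞). -/

import Mathlib

open Real Set

lemma aux_h_pos : ∀ x : ℝ, 0 < x → 0 < x * Real.cosh x - Real.sinh x := by
  have H : StrictMonoOn (fun x : ℝ => x * Real.cosh x - Real.sinh x) (Ici 0) := by
    apply strictMonoOn_of_deriv_pos (convex_Ici 0)
    · fun_prop
    · intro x hx
      rw [interior_Ici] at hx
      have hd : HasDerivAt (fun x : ℝ => x * Real.cosh x - Real.sinh x)
          (x * Real.sinh x) x := by
        have : HasDerivAt (fun x : ℝ => x * Real.cosh x - Real.sinh x)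
            (1 * Real.cosh x + id x * Real.sinh x - Real.cosh x) x :=
          ((hasDerivAt_id x).mul (Real.hasDerivAt_cosh x)).sub (Real.hasDerivAt_sinh x)
        convert this using 1
        simp only [id_eq]
        ring
      rw [hd.deriv]
      exact mul_pos hx (Real.sinh_pos_iff.mpr hx)
  intro x hx
  have := H (self_mem_Ici) (le_of_lt hx) hx
  simpa using this

lemma aux_sinh_div_mono : ∀ a b : ℝ, 0 < a → a < b →
    Real.sinh a / a < Real.sinh b / b := by
  have H : StrictMonoOn (fun x : ℝ => Real.sinh x / x) (Ioi 0) := by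
    apply strictMonoOn_of_deriv_pos (convex_Ioi 0)
    · apply ContinuousOn.div (by fun_prop) (by fun_prop)
      intro x hx; exact ne_of_gt hx
    · intro x hx
      rw [interior_Ioi] at hx
      have hx0 : x ≠ 0 := ne_of_gt hx
      have hd : HasDerivAt (fun x : ℝ => Real.sinh x / x)
          ((Real.cosh x * x - Real.sinh x * 1) / x ^ 2) x :=
        (Real.hasDerivAt_sinh x).div (hasDerivAt_id x) hx0
      rw [hd.deriv]
      apply div_pos _ (by positivity)
      have := aux_h_pos x hx
      nlinarith
  intro a b ha hab
  exact H (mem_Ioi.mpr ha) (mem_Ioi.mpr (ha.trans hab)) hab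

lemma aux_l_eq : ∀ s : ℝ, 0 < s →
    s ^ 2 * exp (-s) / (1 - exp (-s)) ^ 2 = (s / (2 * Real.sinh (s / 2))) ^ 2 := by
  intro s hs
  have hsinh : 0 < Real.sinh (s / 2) := Real.sinh_pos_iff.mpr (by linarith)
  have h1 : exp (-s) < 1 := Real.exp_lt_one_iff.mpr (by linarith)
  have hne : (1 : ℝ) - exp (-s) ≠ 0 := by linarith
  have hes : exp s = exp (s / 2) * exp (s / 2) := by
    rw [← Real.exp_add]; ring_nf
  have hneg : exp (-s) = (exp (s / 2))⁻¹ * (exp (s / 2))⁻¹ := by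
    rw [← Real.exp_neg, ← Real.exp_add]; ring_nf
  have hnegh : exp (-(s / 2)) = (exp (s / 2))⁻¹ := by rw [Real.exp_neg]
  have ht : (0 : ℝ) < exp (s / 2) := Real.exp_pos _
  have key2 : 2 * Real.sinh (s / 2) = exp (s / 2) * (1 - exp (-s)) := by
    rw [Real.sinh_eq, hnegh, hneg]
    field_simp
  rw [key2, div_pow, mul_pow]
  have hsq : exp (s / 2) ^ 2 = exp s := by
    rw [sq, ← Real.exp_add]; ring_nf
  rw [hsq]
  have hmul : exp (-s) * exp s = 1 := by rw [← Real.exp_add]; simp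
  have hes0 : exp s ≠ 0 := (Real.exp_pos s).ne'
  field_simp
  linear_combination hmul

theorem l_strictAnti :
    StrictAntiOn (fun s : ℝ => s ^ 2 * exp (-s) / (1 - exp (-s)) ^ 2) (Ioi (0 : ℝ)) := by
  intro a ha b hb hab
  rw [mem_Ioi] at ha hb
  simp only
  rw [aux_l_eq a ha, aux_l_eq b hb]
  have hsa : 0 < Real.sinh (a / 2) := Real.sinh_pos_iff.mpr (by linarith)
  have hsb : 0 < Real.sinh (b / 2) := Real.sinh_pos_iff.mpr (by linarith)
  have key : Real.sinh (a / 2) / (a / 2) < Real.sinh (b / 2) / (b / 2) :=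
    aux_sinh_div_mono (a / 2) (b / 2) (by linarith) (by linarith)
  have hA : 0 < Real.sinh (a / 2) / (a / 2) := div_pos hsa (by linarith)
  have hinv : (Real.sinh (b / 2) / (b / 2))⁻¹ < (Real.sinh (a / 2) / (a / 2))⁻¹ :=
    inv_strictAnti₀ hA key
  rw [inv_div, inv_div] at hinv
  have hqb : 0 < b / 2 / Real.sinh (b / 2) := div_pos (by linarith) hsb
  have heq : ∀ s : ℝ, s / (2 * Real.sinh (s / 2)) = s / 2 / Real.sinh (s / 2) := by
    intro s; rw [div_div]
  simp only [heq]
  exact pow_lt_pow_left₀ hinv (le_of_lt hqb) (by norm_num)
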